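/- Let T : X → Y be a map and suppose π and λ are finite T-related partitions of X and Y respectively. Then there exist compact Hausdorff topologies on X and Y such that every class of π and every class of λ is compact, and T is continuous. -/

import Mathlib

open Set

variable {X Y : Type*}

/-- The partition `Tπ` of `Y` induced by a map `T : X → Y` and a partition `π` of `X`:
classes of the equivalence `y₁ ∼ y₂` iff the classes of `π` meeting `T⁻¹y₁` and `T⁻¹y₂`
coincide. -/
def ImagePartition (T : X → Y) (p : Set (Set X)) : Set (Set Y) :=
  {D | ∃ y : Y,
    D = {z | {C ∈ p | (T ⁻¹' {z} ∩ C).Nonempty} = {C ∈ p | (T ⁻¹' {y} ∩ C).Nonempty}}}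

/-- The partition `T⁻¹λ` of `X` (nonempty preimages of classes of `λ`). -/
def PreimagePartition (T : X → Y) (q : Set (Set Y)) : Set (Set X) :=
  {S | ∃ B ∈ q, S = T ⁻¹' B ∧ S.Nonempty}

/-- Common refinement of two partitions. -/
def CommonRefinement (p q : Set (Set X)) : Set (Set X) :=
  {S | ∃ A ∈ p, ∃ B ∈ q, S = A ∩ B ∧ S.Nonempty}

/-- `p` refines `q`. -/
def Refines (p q : Set (Set X)) : Prop := ∀ A ∈ p, ∃ B ∈ q, A ⊆ B

/-- Partitions `p` of `X` and `q` of `Y` are `T`-related: every class of `p` is mapped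
by `T` onto some class of `q`. -/
def TRelated (T : X → Y) (p : Set (Set X)) (q : Set (Set Y)) : Prop :=
  ∀ C ∈ p, ∃ D ∈ q, T '' C = D

section AuxCompactify

open Function

/-- A copy of `α` carrying the discrete topology. -/
def DiscAux (α : Type*) : Type _ := α

def toDiscAux {α : Type*} (a : α) : DiscAux α := a

instance {α : Type*} : TopologicalSpace (DiscAux α) := ⊥

instance {α : Type*} : DiscreteTopology (DiscAux α) := ⟨rfl⟩

/-- The class of `x` in the partition `p`. -/
noncomputable def pcl {p : Set (Set X)} (hp : Setoid.IsPartition p) (x : X) : Set X :=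
  (hp.2 x).choose

lemma pcl_mem {p : Set (Set X)} (hp : Setoid.IsPartition p) (x : X) :
    pcl hp x ∈ p ∧ x ∈ pcl hp x := (hp.2 x).choose_spec.1

lemma pcl_eq {p : Set (Set X)} (hp : Setoid.IsPartition p) {x : X} {C : Set X}
    (hC : C ∈ p) (hx : x ∈ C) : C = pcl hp x :=
  (hp.2 x).choose_spec.2 C ⟨hC, hx⟩

lemma some_congr' {α : Type*} {s t : Set α} (hs : s.Nonempty) (ht : t.Nonempty)
    (h : s = t) : Set.Nonempty.some hs = Set.Nonempty.some ht := by subst h; rfl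

/-- A chosen representative of the class of `y`. -/
noncomputable def srep {q : Set (Set Y)} (hq : Setoid.IsPartition q) (y : Y) : Y :=
  Set.Nonempty.some (s := pcl hq y) ⟨y, (pcl_mem hq y).2⟩

lemma srep_mem {q : Set (Set Y)} (hq : Setoid.IsPartition q) (y : Y) :
    srep hq y ∈ pcl hq y := Set.Nonempty.some_mem _

lemma srep_congr {q : Set (Set Y)} (hq : Setoid.IsPartition q) {y y' : Y}
    (h : pcl hq y = pcl hq y') : srep hq y = srep hq y' := some_congr' _ _ h

/-- A chosen representative of the fiber `T⁻¹(T x) ∩ pcl x`. -/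
noncomputable def frep (T : X → Y) {p : Set (Set X)} (hp : Setoid.IsPartition p) (x : X) : X :=
  Set.Nonempty.some (s := T ⁻¹' {T x} ∩ pcl hp x) ⟨x, rfl, (pcl_mem hp x).2⟩

lemma frep_mem (T : X → Y) {p : Set (Set X)} (hp : Setoid.IsPartition p) (x : X) :
    frep T hp x ∈ T ⁻¹' {T x} ∩ pcl hp x := Set.Nonempty.some_mem _

lemma frep_congr (T : X → Y) {p : Set (Set X)} (hp : Setoid.IsPartition p) {x x' : X}
    (h1 : T x = T x') (h2 : pcl hp x = pcl hp x') : frep T hp x = frep T hp x' :=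
  some_congr' _ _ (by rw [h1, h2])

open Classical in
noncomputable def eYf {q : Set (Set Y)} (hq : Setoid.IsPartition q) (y : Y) : OnePoint (DiscAux Y) :=
  if y = srep hq y then OnePoint.infty else (↑(toDiscAux y) : OnePoint (DiscAux Y))

open Classical in
noncomputable def eXf (T : X → Y) {p : Set (Set X)} (hp : Setoid.IsPartition p) (x : X) :
    OnePoint (DiscAux X) :=
  if x = frep T hp x then OnePoint.infty else (↑(toDiscAux x) : OnePoint (DiscAux X))

noncomputable def fXf (T : X → Y) {p : Set (Set X)} {q : Set (Set Y)}
    (hp : Setoid.IsPartition p) (hq : Setoid.IsPartition q) (x : X) :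
    ↥p × OnePoint (DiscAux Y) × OnePoint (DiscAux X) :=
  (⟨pcl hp x, (pcl_mem hp x).1⟩, eYf hq (T x), eXf T hp x)

noncomputable def fYf {q : Set (Set Y)} (hq : Setoid.IsPartition q) (y : Y) :
    ↥q × OnePoint (DiscAux Y) :=
  (⟨pcl hq y, (pcl_mem hq y).1⟩, eYf hq y)

lemma img_pcl (T : X → Y) {p : Set (Set X)} {q : Set (Set Y)}
    (hp : Setoid.IsPartition p) (hq : Setoid.IsPartition q)
    (hrel : TRelated T p q) (x : X) : T '' pcl hp x = pcl hq (T x) := by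
  obtain ⟨D, hD, hTD⟩ := hrel _ (pcl_mem hp x).1
  rw [hTD]
  exact pcl_eq hq hD (hTD ▸ ⟨x, (pcl_mem hp x).2, rfl⟩)

lemma fXf_inj (T : X → Y) {p : Set (Set X)} {q : Set (Set Y)}
    (hp : Setoid.IsPartition p) (hq : Setoid.IsPartition q)
    (hrel : TRelated T p q) : Function.Injective (fXf T hp hq) := by
  intro x x' h
  have h1 : pcl hp x = pcl hp x' := congrArg (fun z => (z.1 : Set X)) h
  have h2 : eYf hq (T x) = eYf hq (T x') := congrArg (fun z => z.2.1) h
  have h3 : eXf T hp x = eXf T hp x' := congrArg (fun z => z.2.2) h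
  have hT : T x = T x' := by
    unfold eYf at h2
    split_ifs at h2 with ha hb hb
    · have hc : pcl hq (T x) = pcl hq (T x') := by
        rw [← img_pcl T hp hq hrel x, ← img_pcl T hp hq hrel x', h1]
      rw [ha, hb]
      exact srep_congr hq hc
    · exact absurd h2 (OnePoint.infty_ne_coe _)
    · exact absurd h2.symm (OnePoint.infty_ne_coe _)
    · exact OnePoint.coe_injective h2
  unfold eXf at h3
  split_ifs at h3 with hc hd hd
  · rw [hc, hd]
    exact frep_congr T hp hT h1
  · exact absurd h3 (OnePoint.infty_ne_coe _)
  · exact absurd h3.symm (OnePoint.infty_ne_coe _)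
  · exact OnePoint.coe_injective h3

lemma fYf_inj {q : Set (Set Y)} (hq : Setoid.IsPartition q) :
    Function.Injective (fYf hq) := by
  intro y y' h
  have h1 : pcl hq y = pcl hq y' := congrArg (fun z => (z.1 : Set Y)) h
  have h2 : eYf hq y = eYf hq y' := congrArg (fun z => z.2) h
  unfold eYf at h2
  split_ifs at h2 with ha hb hb
  · rw [ha, hb]; exact srep_congr hq h1
  · exact absurd h2 (OnePoint.infty_ne_coe _)
  · exact absurd h2.symm (OnePoint.infty_ne_coe _)
  · exact OnePoint.coe_injective h2

lemma isOpen_singleton_onePoint_coe {Z : Type*} [TopologicalSpace Z] [DiscreteTopology Z]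
    (z : Z) : IsOpen {((z : OnePoint Z))} := by
  rw [← Set.image_singleton]
  exact OnePoint.isOpenEmbedding_coe.isOpenMap _ (isOpen_discrete _)

/-- "Saturation": together with any point `x ∈ C`, the image `fXf '' C` contains
the point with the same `Y`-coordinate and `∞` as fiber coordinate. -/
lemma fXf_mem_infty (T : X → Y) {p : Set (Set X)} {q : Set (Set Y)}
    (hp : Setoid.IsPartition p) (hq : Setoid.IsPartition q)
    {C : Set X} (hC : C ∈ p) {x : X} (hx : x ∈ C) :
    fXf T hp hq (frep T hp x) =
      (⟨C, hC⟩, eYf hq (T x), OnePoint.infty) ∧ frep T hp x ∈ C := by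
  have hpx : pcl hp x = C := (pcl_eq hp hC hx).symm
  have hf := frep_mem T hp x
  have hTf : T (frep T hp x) = T x := hf.1
  have hfC : frep T hp x ∈ C := hpx ▸ hf.2
  have hpf : pcl hp (frep T hp x) = C := (pcl_eq hp hC hfC).symm
  have hff : frep T hp (frep T hp x) = frep T hp x :=
    frep_congr T hp hTf (hpf.trans hpx.symm)
  refine ⟨?_, hfC⟩
  unfold fXf
  refine Prod.ext (Subtype.ext hpf) (Prod.ext ?_ ?_)
  · show eYf hq (T (frep T hp x)) = eYf hq (T x)
    rw [hTf]
  · show eXf T hp (frep T hp x) = OnePoint.infty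
    unfold eXf
    rw [if_pos hff.symm]

lemma isClosed_fXf_image
    (T : X → Y) {p : Set (Set X)} {q : Set (Set Y)}
    [TopologicalSpace ↥p] [DiscreteTopology ↥p]
    (hp : Setoid.IsPartition p) (hq : Setoid.IsPartition q)
    (hrel : TRelated T p q) {C : Set X} (hC : C ∈ p) :
    IsClosed (fXf T hp hq '' C) := by
  rw [← isOpen_compl_iff, isOpen_iff_forall_mem_open]
  rintro ⟨P0, a, b⟩ hz
  by_cases hP : P0 = (⟨C, hC⟩ : ↥p)
  · subst hP
    cases b with
    | infty =>
      cases a with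
      | infty =>
        exfalso
        have hCne : C.Nonempty := Set.nonempty_iff_ne_empty.2 (fun h => hp.1 (h ▸ hC))
        obtain ⟨x1, hx1⟩ := hCne
        have hx1C : C = pcl hp x1 := pcl_eq hp hC hx1
        have hd : srep hq (T x1) ∈ T '' C := by
          rw [hx1C, img_pcl T hp hq hrel x1]; exact srep_mem hq (T x1)
        obtain ⟨x2, hx2C, hTx2⟩ := hd
        have hey : eYf hq (T x2) = OnePoint.infty := by
          have hpc : pcl hq (T x2) = pcl hq (T x1) := by
            rw [← img_pcl T hp hq hrel x2, ← img_pcl T hp hq hrel x1,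
              ← pcl_eq hp hC hx2C, ← pcl_eq hp hC hx1]
          have hts : T x2 = srep hq (T x2) := by
            rw [srep_congr hq hpc, ← hTx2]
          unfold eYf
          rw [if_pos hts]
        obtain ⟨hfx, hfC⟩ := fXf_mem_infty T hp hq hC hx2C
        exact hz ⟨frep T hp x2, hfC, by rw [hfx, hey]⟩
      | coe y0 =>
        refine ⟨Set.univ ×ˢ ({((y0 : OnePoint (DiscAux Y)))} ×ˢ Set.univ), ?_, ?_, ?_⟩
        · intro w hw
          rintro ⟨x, hxC, rfl⟩
          have hy : eYf hq (T x) = (y0 : OnePoint (DiscAux Y)) := hw.2.1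
          obtain ⟨hfx, hfC⟩ := fXf_mem_infty T hp hq hC hxC
          exact hz ⟨frep T hp x, hfC, by rw [hfx, hy]⟩
        · exact isOpen_univ.prod ((isOpen_singleton_onePoint_coe y0).prod isOpen_univ)
        · exact ⟨Set.mem_univ _, rfl, Set.mem_univ _⟩
    | coe x0 =>
      by_cases hx0 : x0 ∈ C ∧ x0 ≠ frep T hp x0
      · have ha : a ≠ eYf hq (T x0) := by
          rintro rfl
          refine hz ⟨x0, hx0.1, ?_⟩
          unfold fXf
          refine Prod.ext (Subtype.ext (pcl_eq hp hC hx0.1).symm) (Prod.ext rfl ?_)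
          show eXf T hp x0 = _
          unfold eXf
          rw [if_neg (c := @Eq X x0 (frep T hp x0)) hx0.2]
          rfl
        refine ⟨Set.univ ×ˢ ({eYf hq (T x0)}ᶜ ×ˢ {((x0 : OnePoint (DiscAux X)))}), ?_, ?_, ?_⟩
        · intro w hw
          rintro ⟨x, hxC, rfl⟩
          have hb : eXf T hp x = (x0 : OnePoint (DiscAux X)) := hw.2.2
          have hxx : x = x0 := by
            unfold eXf at hb
            split_ifs at hb
            · exact absurd hb (OnePoint.infty_ne_coe _)
            · exact OnePoint.coe_injective hb
          exact hw.2.1 (by rw [hxx]; exact rfl)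
        · exact isOpen_univ.prod ((isClosed_singleton.isOpen_compl).prod
            (isOpen_singleton_onePoint_coe x0))
        · exact ⟨Set.mem_univ _, ha, rfl⟩
      · refine ⟨Set.univ ×ˢ (Set.univ ×ˢ {((x0 : OnePoint (DiscAux X)))}), ?_, ?_, ?_⟩
        · intro w hw
          rintro ⟨x, hxC, rfl⟩
          have hb : eXf T hp x = (x0 : OnePoint (DiscAux X)) := hw.2.2
          unfold eXf at hb
          split_ifs at hb with hfr
          · exact absurd hb (OnePoint.infty_ne_coe _)
          · have hxx : x = x0 := OnePoint.coe_injective hb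
            exact hx0 ⟨hxx ▸ hxC, hxx ▸ hfr⟩
        · exact isOpen_univ.prod (isOpen_univ.prod (isOpen_singleton_onePoint_coe x0))
        · exact ⟨Set.mem_univ _, Set.mem_univ _, rfl⟩
  · refine ⟨{P0} ×ˢ Set.univ, ?_, (isOpen_discrete _).prod isOpen_univ, rfl, Set.mem_univ _⟩
    intro w hw
    rintro ⟨x, hxC, rfl⟩
    exact hP ((hw.1 : _ = P0).symm.trans (Subtype.ext (pcl_eq hp hC hxC).symm))

lemma isClosed_fYf_image {q : Set (Set Y)}
    [TopologicalSpace ↥q] [DiscreteTopology ↥q]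
    (hq : Setoid.IsPartition q) {D : Set Y} (hD : D ∈ q) :
    IsClosed (fYf hq '' D) := by
  rw [← isOpen_compl_iff, isOpen_iff_forall_mem_open]
  rintro ⟨Q0, a⟩ hz
  by_cases hQ : Q0 = (⟨D, hD⟩ : ↥q)
  · subst hQ
    cases a with
    | infty =>
      exfalso
      have hDne : D.Nonempty := Set.nonempty_iff_ne_empty.2 (fun h => hq.1 (h ▸ hD))
      obtain ⟨y1, hy1⟩ := hDne
      have hy1D : D = pcl hq y1 := pcl_eq hq hD hy1
      have hyD : srep hq y1 ∈ D := hy1D ▸ srep_mem hq y1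
      have hps : pcl hq (srep hq y1) = pcl hq y1 := by
        rw [← pcl_eq hq hD hyD, hy1D]
      refine hz ⟨srep hq y1, hyD, ?_⟩
      refine Prod.ext (Subtype.ext (pcl_eq hq hD hyD).symm) ?_
      show eYf hq (srep hq y1) = _
      unfold eYf
      rw [if_pos (srep_congr hq hps).symm]
    | coe y0 =>
      refine ⟨Set.univ ×ˢ {((y0 : OnePoint (DiscAux Y)))}, ?_,
        isOpen_univ.prod (isOpen_singleton_onePoint_coe y0), Set.mem_univ _, rfl⟩
      intro w hw
      rintro ⟨y, hyD, rfl⟩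
      have hy : eYf hq y = (y0 : OnePoint (DiscAux Y)) := hw.2
      have hyy : y = y0 := by
        unfold eYf at hy
        split_ifs at hy
        · exact absurd hy (OnePoint.infty_ne_coe _)
        · exact OnePoint.coe_injective hy
      refine hz ⟨y, hyD, ?_⟩
      refine Prod.ext (Subtype.ext (pcl_eq hq hD hyD).symm) ?_
      show eYf hq y = _
      rw [hy]
  · refine ⟨{Q0} ×ˢ Set.univ, ?_, (isOpen_discrete _).prod isOpen_univ, rfl, Set.mem_univ _⟩
    intro w hw
    rintro ⟨y, hyD, rfl⟩
    exact hQ ((hw.1 : _ = Q0).symm.trans (Subtype.ext (pcl_eq hq hD hyD).symm))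

end AuxCompactify

theorem compactify_TRelated (T : X → Y)
    (p : Set (Set X)) (q : Set (Set Y))
    (hp : Setoid.IsPartition p) (hpfin : p.Finite)
    (hq : Setoid.IsPartition q) (hqfin : q.Finite)
    (hrel : TRelated T p q) :
    ∃ (tX : TopologicalSpace X) (tY : TopologicalSpace Y),
      @CompactSpace X tX ∧ @T2Space X tX ∧
      @CompactSpace Y tY ∧ @T2Space Y tY ∧
      (∀ A ∈ p, @IsCompact X tX A) ∧ (∀ B ∈ q, @IsCompact Y tY B) ∧
      @Continuous X Y tX tY T := by
  classical
  letI : TopologicalSpace ↥p := ⊥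
  haveI : DiscreteTopology ↥p := ⟨rfl⟩
  letI : TopologicalSpace ↥q := ⊥
  haveI : DiscreteTopology ↥q := ⟨rfl⟩
  haveI : Finite ↥p := hpfin.to_subtype
  haveI : Finite ↥q := hqfin.to_subtype
  refine ⟨TopologicalSpace.induced (fXf T hp hq) inferInstance,
    TopologicalSpace.induced (fYf hq) inferInstance, ?_, ?_, ?_, ?_, ?_, ?_, ?_⟩
  · letI : TopologicalSpace X := TopologicalSpace.induced (fXf T hp hq) inferInstance
    have indX : Topology.IsInducing (fXf T hp hq) := ⟨rfl⟩
    refine ⟨?_⟩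
    rw [indX.isCompact_iff, ← hp.sUnion_eq_univ, Set.sUnion_eq_biUnion, Set.image_iUnion₂]
    exact hpfin.isCompact_biUnion fun C hC => (isClosed_fXf_image T hp hq hrel hC).isCompact
  · letI : TopologicalSpace X := TopologicalSpace.induced (fXf T hp hq) inferInstance
    have embX : Topology.IsEmbedding (fXf T hp hq) := ⟨⟨rfl⟩, fXf_inj T hp hq hrel⟩
    exact embX.t2Space
  · letI : TopologicalSpace Y := TopologicalSpace.induced (fYf hq) inferInstance
    have indY : Topology.IsInducing (fYf hq) := ⟨rfl⟩
    refine ⟨?_⟩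
    rw [indY.isCompact_iff, ← hq.sUnion_eq_univ, Set.sUnion_eq_biUnion, Set.image_iUnion₂]
    exact hqfin.isCompact_biUnion fun D hD => (isClosed_fYf_image hq hD).isCompact
  · letI : TopologicalSpace Y := TopologicalSpace.induced (fYf hq) inferInstance
    have embY : Topology.IsEmbedding (fYf hq) := ⟨⟨rfl⟩, fYf_inj hq⟩
    exact embY.t2Space
  · intro A hA
    letI : TopologicalSpace X := TopologicalSpace.induced (fXf T hp hq) inferInstance
    have indX : Topology.IsInducing (fXf T hp hq) := ⟨rfl⟩
    rw [indX.isCompact_iff]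
    exact (isClosed_fXf_image T hp hq hrel hA).isCompact
  · intro B hB
    letI : TopologicalSpace Y := TopologicalSpace.induced (fYf hq) inferInstance
    have indY : Topology.IsInducing (fYf hq) := ⟨rfl⟩
    rw [indY.isCompact_iff]
    exact (isClosed_fYf_image hq hB).isCompact
  · letI : TopologicalSpace X := TopologicalSpace.induced (fXf T hp hq) inferInstance
    letI : TopologicalSpace Y := TopologicalSpace.induced (fYf hq) inferInstance
    refine continuous_induced_rng.2 ?_
    have hcomm : (fYf hq ∘ T) =
        (fun w : ↥p × OnePoint (DiscAux Y) × OnePoint (DiscAux X) =>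
          ((⟨(hrel w.1 w.1.2).choose, (hrel w.1 w.1.2).choose_spec.1⟩ : ↥q), w.2.1))
          ∘ fXf T hp hq := by
      funext x
      refine Prod.ext (Subtype.ext ?_) rfl
      show pcl hq (T x) = (hrel (pcl hp x) (pcl_mem hp x).1).choose
      rw [← ((hrel (pcl hp x) (pcl_mem hp x).1).choose_spec).2, img_pcl T hp hq hrel x]
    rw [hcomm]
    have hcont1 : Continuous (fun c : ↥p =>
        ((⟨(hrel c c.2).choose, (hrel c c.2).choose_spec.1⟩ : ↥q))) :=
      continuous_of_discreteTopology
    exact ((hcont1.comp continuous_fst).prodMk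
      ((continuous_fst.comp continuous_snd))).comp continuous_induced_dom
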